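/- arXiv:2508.10350 — 2 statements merged into one kernel-verified Lean document; each statement's English description precedes it below -/
import Mathlib

section
/- A column-stochastic matrix A (CU with C, U column-stochastic) admits unique recovery of every probability vector p from Ap if and only if rank(A) = N. -/
/-- Theorem 1 (learnability): for A = CU with C, U column-stochastic, every
probability vector p is uniquely recoverable from A p iff rank(A) = N. -/
theorem learnable_iff_full_rank
    (M N : ℕ)
    (C : Matrix (Fin M) (Fin M) ℝ) (U : Matrix (Fin M) (Fin N) ℝ)
    (hC0 : ∀ i j, 0 ≤ C i j) (hC1 : ∀ j, ∑ i, C i j = 1)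
    (hU0 : ∀ i j, 0 ≤ U i j) (hU1 : ∀ j, ∑ i, U i j = 1)
    (A : Matrix (Fin M) (Fin N) ℝ) (hA : A = C * U) :
    (∀ p1 p2 : Fin N → ℝ,
      (∀ n, 0 ≤ p1 n) → (∑ n, p1 n = 1) →
      (∀ n, 0 ≤ p2 n) → (∑ n, p2 n = 1) →
      A.mulVec p1 = A.mulVec p2 → p1 = p2) ↔ A.rank = N := by
  -- columns of A sum to 1
  have hA1 : ∀ j, ∑ i, A i j = 1 := by
    intro j
    subst hA
    simp only [Matrix.mul_apply]
    rw [Finset.sum_comm]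
    calc ∑ k, ∑ i, C i k * U k j = ∑ k, (∑ i, C i k) * U k j := by
          simp [Finset.sum_mul]
      _ = ∑ k, U k j := by simp [hC1]
      _ = 1 := hU1 j
  have hsum : ∀ v : Fin N → ℝ, ∑ m, A.mulVec v m = ∑ n, v n := by
    intro v
    simp only [Matrix.mulVec, dotProduct]
    rw [Finset.sum_comm]
    calc ∑ n, ∑ m, A m n * v n = ∑ n, (∑ m, A m n) * v n := by
          simp [Finset.sum_mul]
      _ = ∑ n, v n := by simp [hA1]
  -- rank = N iff ker of mulVecLin is trivial
  have hrn : A.rank + Module.finrank ℝ (LinearMap.ker A.mulVecLin) = N := by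
    rw [Matrix.rank]
    rw [LinearMap.finrank_range_add_finrank_ker A.mulVecLin]
    simp
  constructor
  · intro h
    by_contra hne
    have hlt : A.rank < N := lt_of_le_of_ne (Matrix.rank_le_width A) hne
    have hker : LinearMap.ker A.mulVecLin ≠ ⊥ := by
      intro hbot
      rw [hbot] at hrn
      simp at hrn
      omega
    obtain ⟨v, hv, hv0⟩ := Submodule.exists_mem_ne_zero_of_ne_bot hker
    have hAv : A.mulVec v = 0 := hv
    have hvs : ∑ n, v n = 0 := by
      have := hsum v
      rw [hAv] at this
      simpa using this.symm
    obtain ⟨n0, hn0⟩ : ∃ n, v n ≠ 0 := by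
      by_contra hc
      push_neg at hc
      exact hv0 (funext hc)
    have hN : 0 < N := n0.pos
    set s : ℝ := ∑ n, |v n| with hs
    have hs0 : 0 < 1 + s := by
      have : 0 ≤ s := Finset.sum_nonneg fun n _ => abs_nonneg _
      linarith
    have hNpos : (0:ℝ) < N := by exact_mod_cast hN
    set ε : ℝ := 1 / (N * (1 + s)) with hε
    have hεpos : 0 < ε := by positivity
    have habs : ∀ n, ε * |v n| ≤ 1 / N := by
      intro n
      have h1 : |v n| ≤ s := Finset.single_le_sum (f := fun n => |v n|)
        (fun n _ => abs_nonneg _) (Finset.mem_univ n)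
      have h2 : ε * |v n| ≤ ε * (1 + s) := by nlinarith
      have h3 : ε * (1 + s) = 1 / N := by
        rw [hε, div_mul_eq_mul_div, one_mul, div_eq_div_iff (by positivity) (by positivity)]
        ring
      linarith
    set p1 : Fin N → ℝ := fun _ => 1 / N with hp1
    set p2 : Fin N → ℝ := fun n => 1 / N + ε * v n with hp2
    have hp1nn : ∀ n, 0 ≤ p1 n := fun n => by positivity
    have hp1s : ∑ n, p1 n = 1 := by
      simp [hp1, Finset.sum_const]
      field_simp
    have hp2nn : ∀ n, 0 ≤ p2 n := by
      intro n
      have h1 : ε * v n ≥ -(ε * |v n|) := by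
        have := neg_abs_le (v n)
        nlinarith
      have := habs n
      simp only [hp2]
      linarith
    have hp2s : ∑ n, p2 n = 1 := by
      simp only [hp2]
      rw [Finset.sum_add_distrib, ← Finset.mul_sum, hvs]
      rw [mul_zero, add_zero]
      exact hp1s
    have hAp : A.mulVec p1 = A.mulVec p2 := by
      have : p2 = p1 + ε • v := by
        funext n; simp [hp1, hp2]
      rw [this, Matrix.mulVec_add, Matrix.mulVec_smul, hAv]
      simp
    have := h p1 p2 hp1nn hp1s hp2nn hp2s hAp
    have : p1 n0 = p2 n0 := congrFun this n0
    simp only [hp1, hp2] at this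
    have : ε * v n0 = 0 := by linarith
    rcases mul_eq_zero.mp this with h | h
    · exact absurd h (ne_of_gt hεpos)
    · exact hn0 h
  · intro h p1 p2 _ _ _ _ hAe
    have hker : LinearMap.ker A.mulVecLin = ⊥ := by
      rw [h] at hrn
      have : Module.finrank ℝ (LinearMap.ker A.mulVecLin) = 0 := by omega
      exact Submodule.finrank_eq_zero.mp this
    have hinj : Function.Injective A.mulVecLin := LinearMap.ker_eq_bot.mp hker
    exact hinj hAe
end

section
/- Under the setup of Theorems 2 and 3, the expected semantic distortion gap satisfies E[D_{p̂_T} − D_p] ≤ d_max √(NM) / (σ_min(A) √T), where D_q denotes the expected distortion of the Bayes decoder designed for prior q and evaluated under true prior p. -/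
open MeasureTheory ProbabilityTheory Matrix

lemma aux_cs {ι : Type*} [Fintype ι] (x : ι → ℝ) :
    ∑ i, |x i| ≤ Real.sqrt (Fintype.card ι) * Real.sqrt (∑ i, x i ^ 2) := by
  have h := Real.sum_mul_le_sqrt_mul_sqrt Finset.univ (fun i => |x i|) 1
  simpa [sq_abs, mul_comm] using h

lemma aux_int_bound {Ω : Type*} [MeasurableSpace Ω] {μ : Measure Ω} [IsFiniteMeasure μ]
    {f : Ω → ℝ} (hf : Measurable f) (C : ℝ) (h : ∀ ω, |f ω| ≤ C) : Integrable f μ := by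
  refine Integrable.mono (integrable_const C) hf.aestronglyMeasurable (ae_of_all _ ?_)
  intro ω
  simpa [Real.norm_eq_abs] using (h ω).trans (le_abs_self C)

lemma aux_sqrt_integral {Ω : Type*} [MeasurableSpace Ω] (μ : Measure Ω) [IsProbabilityMeasure μ]
    (f : Ω → ℝ) (hf : Measurable f) (h0 : ∀ ω, 0 ≤ f ω) (C : ℝ) (hC : ∀ ω, f ω ≤ C) :
    ∫ ω, Real.sqrt (f ω) ∂μ ≤ Real.sqrt (∫ ω, f ω ∂μ) := by
  have hconj : Real.HolderConjugate 2 2 := Real.HolderConjugate.two_two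
  have hmeas : Measurable fun ω => Real.sqrt (f ω) := hf.sqrt
  have hmem : MemLp (fun ω => Real.sqrt (f ω)) (ENNReal.ofReal 2) μ := by
    refine MemLp.of_bound hmeas.aestronglyMeasurable (Real.sqrt (max C 0)) (ae_of_all _ ?_)
    intro ω
    rw [Real.norm_eq_abs, abs_of_nonneg (Real.sqrt_nonneg _)]
    exact Real.sqrt_le_sqrt ((hC ω).trans (le_max_left _ _))
  have hmem1 : MemLp (fun _ : Ω => (1:ℝ)) (ENNReal.ofReal 2) μ := by
    refine MemLp.of_bound aestronglyMeasurable_const 1 (ae_of_all _ ?_)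
    intro ω; simp
  have h := integral_mul_le_Lp_mul_Lq_of_nonneg hconj
    (ae_of_all _ fun ω => Real.sqrt_nonneg (f ω)) (ae_of_all _ fun _ => zero_le_one) hmem hmem1
  simp only [mul_one] at h
  have h2 : ∀ ω, Real.sqrt (f ω) ^ (2:ℝ) = f ω := by
    intro ω
    rw [show ((2:ℝ)) = ((2:ℕ):ℝ) by norm_num, Real.rpow_natCast, Real.sq_sqrt (h0 ω)]
  have h3 : ((1:ℝ)) ^ (2:ℝ) = 1 := Real.one_rpow _
  simp only [h2, h3, integral_const, measure_univ, probReal_univ, ENNReal.toReal_one, one_smul,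
    Real.one_rpow, mul_one] at h
  calc ∫ ω, Real.sqrt (f ω) ∂μ ≤ (∫ ω, f ω ∂μ) ^ ((1:ℝ)/2) := h
    _ = Real.sqrt (∫ ω, f ω ∂μ) := by rw [Real.sqrt_eq_rpow]

lemma aux_term (dmax x y a dd : ℝ) (ha : 0 ≤ a) (hdd : 0 ≤ dd) (hdm : dd ≤ dmax) :
    x * a * dd ≤ y * a * dd + |x - y| * a * dmax := by
  have h1 : (x - y) * (a * dd) ≤ |x - y| * (a * dd) :=
    mul_le_mul_of_nonneg_right (le_abs_self _) (mul_nonneg ha hdd)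
  have h2 : |x - y| * (a * dd) ≤ |x - y| * (a * dmax) :=
    mul_le_mul_of_nonneg_left (mul_le_mul_of_nonneg_left hdm ha) (abs_nonneg _)
  nlinarith [h1, h2]

lemma aux_mismatch {M N : ℕ} (A : Matrix (Fin M) (Fin N) ℝ)
    (hA0 : ∀ i j, 0 ≤ A i j) (hAcol : ∀ j, ∑ i, A i j = 1)
    (d : Fin N → Fin N → ℝ) (dmax : ℝ) (hd0 : ∀ w wh, 0 ≤ d w wh) (hd1 : ∀ w wh, d w wh ≤ dmax)
    (p : Fin N → ℝ) (V : (Fin N → ℝ) → Fin M → Fin N)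
    (hV : ∀ (r : Fin N → ℝ) (sh : Fin M) (wh : Fin N),
      ∑ w, r w * A sh w * d w (V r sh) ≤ ∑ w, r w * A sh w * d w wh)
    (D : (Fin N → ℝ) → ℝ)
    (hD : ∀ r, D r = ∑ sh, ∑ w, p w * A sh w * d w (V r sh))
    (r : Fin N → ℝ) :
    D r - D p ≤ 2 * dmax * ∑ w, |r w - p w| := by
  have key : ∀ sh : Fin M, ∑ w, p w * A sh w * d w (V r sh) ≤
      (∑ w, p w * A sh w * d w (V p sh)) + 2 * ∑ w, |r w - p w| * A sh w * dmax := by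
    intro sh
    have h1 : ∑ w, p w * A sh w * d w (V r sh) ≤
        ∑ w, (r w * A sh w * d w (V r sh) + |r w - p w| * A sh w * dmax) := by
      refine Finset.sum_le_sum fun w _ => ?_
      have := aux_term dmax (p w) (r w) (A sh w) (d w (V r sh)) (hA0 sh w) (hd0 _ _) (hd1 _ _)
      calc p w * A sh w * d w (V r sh)
          ≤ r w * A sh w * d w (V r sh) + |p w - r w| * A sh w * dmax := this
        _ = r w * A sh w * d w (V r sh) + |r w - p w| * A sh w * dmax := by
            rw [abs_sub_comm]
    have h2 := hV r sh (V p sh)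
    have h3 : ∑ w, r w * A sh w * d w (V p sh) ≤
        ∑ w, (p w * A sh w * d w (V p sh) + |r w - p w| * A sh w * dmax) := by
      refine Finset.sum_le_sum fun w _ => ?_
      exact aux_term dmax (r w) (p w) (A sh w) (d w (V p sh)) (hA0 sh w) (hd0 _ _) (hd1 _ _)
    rw [Finset.sum_add_distrib] at h1 h3
    linarith
  have hsum := Finset.sum_le_sum fun sh (_ : sh ∈ Finset.univ) => key sh
  rw [Finset.sum_add_distrib] at hsum
  have hswap : ∑ sh : Fin M, ∑ w, |r w - p w| * A sh w * dmax
      = dmax * ∑ w, |r w - p w| := by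
    rw [Finset.sum_comm, Finset.mul_sum]
    refine Finset.sum_congr rfl fun w _ => ?_
    calc ∑ sh : Fin M, |r w - p w| * A sh w * dmax
        = (|r w - p w| * dmax) * ∑ sh : Fin M, A sh w := by
          rw [Finset.mul_sum]; exact Finset.sum_congr rfl fun sh _ => by ring
      _ = dmax * |r w - p w| := by rw [hAcol w]; ring
  rw [← Finset.mul_sum, hswap] at hsum
  rw [hD r, hD p]
  linarith

lemma aux_Gunit {M N : ℕ} (A : Matrix (Fin M) (Fin N) ℝ) (σ : ℝ) (hσ : 0 < σ)
    (hσmin : ∀ x : Fin N → ℝ,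
      σ * Real.sqrt (∑ n, (x n) ^ 2) ≤ Real.sqrt (∑ m, (A.mulVec x m) ^ 2)) :
    IsUnit (Aᵀ * A) := by
  rw [← Matrix.mulVec_injective_iff_isUnit]
  intro x y hxy
  have hz : (Aᵀ * A).mulVec (x - y) = 0 := by
    rw [Matrix.mulVec_sub, hxy, sub_self]
  set z := x - y with hzdef
  have h0 : z ⬝ᵥ (Aᵀ * A).mulVec z = 0 := by rw [hz]; simp
  have he : z ⬝ᵥ (Aᵀ * A).mulVec z = ∑ m, (A.mulVec z m) ^ 2 := by
    rw [← Matrix.mulVec_mulVec, Matrix.dotProduct_mulVec, Matrix.vecMul_transpose]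
    simp [dotProduct, pow_two]
  have hA0 : Real.sqrt (∑ m, (A.mulVec z m) ^ 2) = 0 := by rw [← he, h0, Real.sqrt_zero]
  have h1 := hσmin z
  rw [hA0] at h1
  have h2 : Real.sqrt (∑ n, (z n) ^ 2) = 0 := by
    have := Real.sqrt_nonneg (∑ n, (z n) ^ 2)
    nlinarith
  have hnn : 0 ≤ ∑ n, (z n) ^ 2 := Finset.sum_nonneg fun n _ => sq_nonneg _
  have h3 : ∑ n, (z n) ^ 2 = 0 := by nlinarith [Real.sq_sqrt hnn]
  have hz0 : z = 0 := by
    funext n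
    have := (Finset.sum_eq_zero_iff_of_nonneg (fun n _ => sq_nonneg (z n))).mp h3 n
      (Finset.mem_univ n)
    exact pow_eq_zero_iff (n := 2) (by norm_num) |>.mp this
  exact sub_eq_zero.mp (hzdef ▸ hz0)

lemma aux_BA {M N : ℕ} (A : Matrix (Fin M) (Fin N) ℝ) (hG : IsUnit (Aᵀ * A)) :
    ((Aᵀ * A)⁻¹ * Aᵀ) * A = 1 := by
  rw [Matrix.mul_assoc]
  exact Matrix.nonsing_inv_mul _ ((Matrix.isUnit_iff_isUnit_det _).mp hG)

lemma aux_proj {M N : ℕ} (A : Matrix (Fin M) (Fin N) ℝ) (hG : IsUnit (Aᵀ * A))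
    (v : Fin M → ℝ) :
    Real.sqrt (∑ m, ((A * ((Aᵀ * A)⁻¹ * Aᵀ)).mulVec v m) ^ 2)
      ≤ Real.sqrt (∑ m, (v m) ^ 2) := by
  set B := (Aᵀ * A)⁻¹ * Aᵀ with hB
  set P := A * B with hP
  have hGT : (Aᵀ * A)ᵀ = Aᵀ * A := by
    rw [Matrix.transpose_mul, Matrix.transpose_transpose]
  have hPT : Pᵀ = P := by
    rw [hP, hB, Matrix.transpose_mul, Matrix.transpose_mul, Matrix.transpose_transpose,
      Matrix.transpose_nonsing_inv, hGT, Matrix.mul_assoc]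
  have hPP : P * P = P := by
    calc P * P = A * ((B * A) * B) := by simp only [hP, Matrix.mul_assoc]
      _ = P := by rw [hB, aux_BA A hG, Matrix.one_mul, hP]
  set u := P.mulVec v with hu
  have e1 : ∑ m, (u m) ^ 2 = v ⬝ᵥ u := by
    have hd : u ⬝ᵥ u = ∑ m, (u m) ^ 2 := by simp [dotProduct, pow_two]
    rw [← hd]
    calc u ⬝ᵥ u = (v ᵥ* Pᵀ) ⬝ᵥ u := by rw [Matrix.vecMul_transpose]
      _ = v ⬝ᵥ (Pᵀ.mulVec u) := (Matrix.dotProduct_mulVec v Pᵀ u).symm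
      _ = v ⬝ᵥ u := by rw [hPT, hu, Matrix.mulVec_mulVec, hPP]
  have e2 : v ⬝ᵥ u ≤ Real.sqrt (∑ m, (v m) ^ 2) * Real.sqrt (∑ m, (u m) ^ 2) := by
    simpa [dotProduct] using Real.sum_mul_le_sqrt_mul_sqrt Finset.univ v u
  have hnn : 0 ≤ ∑ m, (u m) ^ 2 := Finset.sum_nonneg fun m _ => sq_nonneg _
  have h4 : Real.sqrt (∑ m, (u m) ^ 2) ^ 2 = ∑ m, (u m) ^ 2 := Real.sq_sqrt hnn
  nlinarith [Real.sqrt_nonneg (∑ m, (u m) ^ 2), Real.sqrt_nonneg (∑ m, (v m) ^ 2),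
    sq_nonneg (Real.sqrt (∑ m, (u m) ^ 2) - Real.sqrt (∑ m, (v m) ^ 2))]

lemma aux_var {Ω : Type*} [MeasurableSpace Ω] (μ : Measure Ω) [IsProbabilityMeasure μ]
    (T : ℕ) (hT : 1 ≤ T) (X : Fin T → Ω → ℝ) (c : ℝ)
    (hX01 : ∀ t ω, X t ω = 0 ∨ X t ω = 1)
    (hXm : ∀ t, Measurable (X t))
    (hXE : ∀ t, ∫ ω, X t ω ∂μ = c)
    (hXind : ∀ t u, t ≠ u → ∫ ω, X t ω * X u ω ∂μ = c * c) :
    ∫ ω, ((∑ t, X t ω) / T - c) ^ 2 ∂μ ≤ 1 / (4 * T) := by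
  have hTpos : (0:ℝ) < T := by exact_mod_cast Nat.lt_of_lt_of_le Nat.zero_lt_one hT
  have hX0 : ∀ t ω, 0 ≤ X t ω := fun t ω => by rcases hX01 t ω with h | h <;> simp [h]
  have hX1 : ∀ t ω, X t ω ≤ 1 := fun t ω => by rcases hX01 t ω with h | h <;> simp [h]
  have hXabs : ∀ t ω, |X t ω| ≤ 1 := fun t ω => abs_le.mpr ⟨by linarith [hX0 t ω], hX1 t ω⟩
  have hXint : ∀ t, Integrable (X t) μ := fun t => aux_int_bound (hXm t) 1 (hXabs t)
  have t0 : Fin T := ⟨0, hT⟩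
  have hc0 : 0 ≤ c := by
    rw [← hXE t0]; exact integral_nonneg (hX0 t0)
  have hc1 : c ≤ 1 := by
    rw [← hXE t0]
    calc ∫ ω, X t0 ω ∂μ ≤ ∫ _, (1:ℝ) ∂μ :=
        integral_mono (hXint t0) (integrable_const 1) (hX1 t0)
      _ = 1 := by simp
  have hYint : ∀ t u, Integrable (fun ω => (X t ω - c) * (X u ω - c)) μ := by
    intro t u
    refine aux_int_bound (((hXm t).sub measurable_const).mul ((hXm u).sub measurable_const))
      ((1 + c) * (1 + c)) fun ω => ?_
    rw [abs_mul]
    have h1 : |X t ω - c| ≤ 1 + c := by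
      rw [abs_le]; constructor <;> nlinarith [hX0 t ω, hX1 t ω]
    have h2 : |X u ω - c| ≤ 1 + c := by
      rw [abs_le]; constructor <;> nlinarith [hX0 u ω, hX1 u ω]
    exact mul_le_mul h1 h2 (abs_nonneg _) (by linarith)
  have hY : ∀ t u : Fin T, ∫ ω, (X t ω - c) * (X u ω - c) ∂μ
      = if u = t then c - c * c else 0 := by
    intro t u
    have hXXm : Measurable (fun ω => X t ω * X u ω) := (hXm t).mul (hXm u)
    have hXXint : Integrable (fun ω => X t ω * X u ω) μ := by
      refine aux_int_bound hXXm 1 fun ω => ?_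
      rw [abs_mul]
      calc |X t ω| * |X u ω| ≤ 1 * 1 :=
          mul_le_mul (hXabs t ω) (hXabs u ω) (abs_nonneg _) zero_le_one
        _ = 1 := one_mul 1
    have I1 : Integrable (fun ω => X t ω * X u ω - c * X t ω) μ :=
      hXXint.sub ((hXint t).const_mul c)
    have I2 : Integrable (fun ω => c * X u ω - c * c) μ :=
      ((hXint u).const_mul c).sub (integrable_const _)
    have hRW : ∫ ω, (X t ω - c) * (X u ω - c) ∂μ
        = ∫ ω, (X t ω * X u ω - c * X t ω) - (c * X u ω - c * c) ∂μ := by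
      apply integral_congr_ae
      filter_upwards with ω
      ring
    rw [hRW, integral_sub I1 I2, integral_sub hXXint ((hXint t).const_mul c),
      integral_sub ((hXint u).const_mul c) (integrable_const _),
      integral_const_mul, integral_const_mul, hXE t, hXE u, integral_const]
    by_cases htu : u = t
    · subst htu
      have hXX : ∫ ω, X u ω * X u ω ∂μ = c := by
        rw [← hXE u]
        apply integral_congr_ae
        filter_upwards with ω
        rcases hX01 u ω with h | h <;> simp [h]
      rw [hXX, if_pos rfl]
      simp
    · rw [hXind t u (fun h => htu h.symm), if_neg htu]
      simp
  have hsplit : ∀ ω : Ω, ((∑ t, X t ω) / T - c) ^ 2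
      = (∑ t, (X t ω - c)) ^ 2 / (T:ℝ) ^ 2 := by
    intro ω
    have hb : (∑ t, X t ω) / T - c = (∑ t, (X t ω - c)) / (T:ℝ) := by
      rw [Finset.sum_sub_distrib, Finset.sum_const, Finset.card_univ, Fintype.card_fin,
        nsmul_eq_mul]
      field_simp
    rw [hb, div_pow]
  have hsq : ∀ ω : Ω, (∑ t, (X t ω - c)) ^ 2
      = ∑ t, ∑ u, (X t ω - c) * (X u ω - c) := by
    intro ω; rw [sq, Finset.sum_mul_sum]
  calc ∫ ω, ((∑ t, X t ω) / T - c) ^ 2 ∂μ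
      = ∫ ω, (∑ t, ∑ u, (X t ω - c) * (X u ω - c)) / (T:ℝ) ^ 2 ∂μ := by
        apply integral_congr_ae; filter_upwards with ω; rw [hsplit ω, hsq ω]
    _ = (∫ ω, (∑ t, ∑ u, (X t ω - c) * (X u ω - c)) ∂μ) / (T:ℝ) ^ 2 := integral_div _ _
    _ = (∑ t, ∑ u, ∫ ω, (X t ω - c) * (X u ω - c) ∂μ) / (T:ℝ) ^ 2 := by
        rw [integral_finset_sum _ (fun t _ => integrable_finset_sum _ (fun u _ => hYint t u))]
        congr 1
        exact Finset.sum_congr rfl fun t _ => integral_finset_sum _ (fun u _ => hYint t u)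
    _ = ((T:ℝ) * (c - c * c)) / (T:ℝ) ^ 2 := by
        simp only [hY]
        rw [Finset.sum_congr rfl (fun t _ => Finset.sum_ite_eq' Finset.univ t
          (fun _ => c - c * c)), Finset.sum_congr rfl (fun t _ => if_pos (Finset.mem_univ t))]
        simp [mul_comm]
        ring
    _ = (c - c * c) / (T:ℝ) := by field_simp
    _ ≤ (1/4) / (T:ℝ) := by
        apply (div_le_div_iff_of_pos_right hTpos).mpr
        nlinarith [sq_nonneg (c - 1/2)]
    _ = 1 / (4 * T) := by ring
/-- Theorem 3 (semantic distortion gap): under the setup of Theorems 2 and 3,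
with a bounded distortion d ≤ d_max, effective transmission matrix A = CU of
full column rank and smallest singular value σ > 0, learned prior
p̂_T = A†q̂_T from T i.i.d. observations drawn from q = Ap, and Bayes decoders
V r minimizing the expected posterior distortion under prior r, the expected
distortion gap of the mismatched decoder satisfies
E[D_{p̂_T} - D_p] ≤ d_max √(NM) / (σ√T). -/
theorem semantic_distortion_gap
    {Ω : Type*} [MeasurableSpace Ω] (μ : Measure Ω) [IsProbabilityMeasure μ]
    (M N T : ℕ) (hT : 1 ≤ T)
    (C : Matrix (Fin M) (Fin M) ℝ) (U : Matrix (Fin M) (Fin N) ℝ)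
    (hC0 : ∀ i j, 0 ≤ C i j) (hC1 : ∀ j, ∑ i, C i j = 1)
    (hU0 : ∀ i j, 0 ≤ U i j) (hU1 : ∀ j, ∑ i, U i j = 1)
    (A : Matrix (Fin M) (Fin N) ℝ) (hA : A = C * U)
    (hrank : A.rank = N)
    (σ : ℝ) (hσ : 0 < σ)
    (hσmin : ∀ x : Fin N → ℝ,
      σ * Real.sqrt (∑ n, (x n) ^ 2) ≤ Real.sqrt (∑ m, (A.mulVec x m) ^ 2))
    (d : Fin N → Fin N → ℝ) (dmax : ℝ)
    (hd0 : ∀ w wh, 0 ≤ d w wh) (hd1 : ∀ w wh, d w wh ≤ dmax)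
    (p : Fin N → ℝ) (hp0 : ∀ n, 0 ≤ p n) (hp1 : ∑ n, p n = 1)
    (s : Fin T → Ω → Fin M)
    (hmeas : ∀ t, Measurable (s t))
    (hdist : ∀ t m, μ {ω | s t ω = m} = ENNReal.ofReal (A.mulVec p m))
    (hindep : iIndepFun s μ)
    (phat : Ω → Fin N → ℝ)
    (hphat : ∀ ω, phat ω = ((A.transpose * A)⁻¹ * A.transpose).mulVec
      (fun m => (∑ t, if s t ω = m then (1 : ℝ) else 0) / T))
    -- Bayes decoder: V r ŝ minimizes the posterior expected distortion
    -- ψ_r(ŵ, ŝ) = ∑_w r(w) p(ŝ|w) d(w, ŵ) under prior r, where p(ŝ|w) = A ŝ w.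
    (V : (Fin N → ℝ) → Fin M → Fin N)
    (hV : ∀ (r : Fin N → ℝ) (sh : Fin M) (wh : Fin N),
      ∑ w, r w * A sh w * d w (V r sh) ≤ ∑ w, r w * A sh w * d w wh)
    -- D r: expected distortion of the decoder designed for prior r,
    -- evaluated under the true prior p.
    (D : (Fin N → ℝ) → ℝ)
    (hD : ∀ r, D r = ∑ sh, ∑ w, p w * A sh w * d w (V r sh)) :
    ∫ ω, (D (phat ω) - D p) ∂μ
      ≤ dmax * Real.sqrt (N * M) / (σ * Real.sqrt T) := by
  classical
  -- basic facts
  have hTpos : (0:ℝ) < T := by exact_mod_cast Nat.lt_of_lt_of_le Nat.zero_lt_one hT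
  have hsT : 0 < Real.sqrt T := Real.sqrt_pos.mpr hTpos
  have hN : 0 < N := by
    rcases Nat.eq_zero_or_pos N with h | h
    · subst h; simp at hp1
    · exact h
  have hdmax : 0 ≤ dmax := le_trans (hd0 ⟨0, hN⟩ ⟨0, hN⟩) (hd1 ⟨0, hN⟩ ⟨0, hN⟩)
  have hA0 : ∀ i j, 0 ≤ A i j := by
    intro i j
    rw [hA, Matrix.mul_apply]
    exact Finset.sum_nonneg fun k _ => mul_nonneg (hC0 i k) (hU0 k j)
  have hAcol : ∀ j, ∑ i, A i j = 1 := by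
    intro j
    simp only [hA, Matrix.mul_apply]
    rw [Finset.sum_comm]
    simp only [← Finset.sum_mul, hC1, one_mul]
    exact hU1 j
  have hGunit : IsUnit (Aᵀ * A) := aux_Gunit A σ hσ hσmin
  -- RHS nonneg (used when LHS is not integrable)
  have hRHS0 : 0 ≤ dmax * Real.sqrt (N * M) / (σ * Real.sqrt T) :=
    div_nonneg (mul_nonneg hdmax (Real.sqrt_nonneg _))
      (mul_nonneg hσ.le (Real.sqrt_nonneg _))
  -- probabilities
  set q : Fin M → ℝ := A.mulVec p with hqdef
  have hq0 : ∀ m, 0 ≤ q m := by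
    intro m
    show 0 ≤ ∑ w, A m w * p w
    exact Finset.sum_nonneg fun w _ => mul_nonneg (hA0 m w) (hp0 w)
  have hqsum : ∑ m, q m = 1 := by
    simp only [hqdef, Matrix.mulVec, dotProduct]
    rw [Finset.sum_comm]
    simp only [← Finset.sum_mul, hAcol, one_mul]
    exact hp1
  have hq1 : ∀ m, q m ≤ 1 := by
    intro m
    rw [← hqsum]
    exact Finset.single_le_sum (fun m' (_ : m' ∈ Finset.univ) => hq0 m') (Finset.mem_univ m)
  -- indicator variables
  set X : Fin T → Fin M → Ω → ℝ := fun t m ω => if s t ω = m then 1 else 0 with hXdef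
  have hX01 : ∀ t m ω, X t m ω = 0 ∨ X t m ω = 1 := by
    intro t m ω
    by_cases h : s t ω = m <;> simp [hXdef, h]
  have hXm : ∀ t m, Measurable (X t m) := by
    intro t m
    exact Measurable.ite (hmeas t (measurableSet_singleton m)) measurable_const measurable_const
  have hXE : ∀ t m, ∫ ω, X t m ω ∂μ = q m := by
    intro t m
    have hind : X t m = Set.indicator (s t ⁻¹' {m}) (fun _ => (1:ℝ)) := by
      funext ω
      by_cases h : s t ω = m <;> simp [hXdef, Set.indicator_apply, h]
    have hμ : μ (s t ⁻¹' {m}) = ENNReal.ofReal (q m) := hdist t m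
    rw [hind, integral_indicator_const (1:ℝ) (hmeas t (measurableSet_singleton m)),
      measureReal_def, hμ, smul_eq_mul, mul_one, ENNReal.toReal_ofReal (hq0 m)]
  have hXprod : ∀ m, ∀ t u : Fin T, t ≠ u → ∫ ω, X t m ω * X u m ω ∂μ = q m * q m := by
    intro m t u htu
    have hind := hindep.indepFun htu
    set g : Fin M → ℝ := fun m' => if m' = m then 1 else 0 with hgdef
    have hg : Measurable g := measurable_of_countable g
    have h2 : IndepFun (g ∘ s t) (g ∘ s u) μ := hind.comp hg hg
    have h3 := h2.integral_mul_eq_mul_integral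
      ((hg.comp (hmeas t)).aestronglyMeasurable) ((hg.comp (hmeas u)).aestronglyMeasurable)
    have hgt : g ∘ s t = X t m := rfl
    have hgu : g ∘ s u = X u m := rfl
    rw [hgt, hgu] at h3
    calc ∫ ω, X t m ω * X u m ω ∂μ = ∫ ω, (X t m * X u m) ω ∂μ := rfl
      _ = (∫ ω, X t m ω ∂μ) * ∫ ω, X u m ω ∂μ := h3
      _ = q m * q m := by rw [hXE t m, hXE u m]
  -- empirical error
  set e : Ω → Fin M → ℝ := fun ω m => (∑ t, X t m ω) / T - q m with hedef
  have hvar : ∀ m, ∫ ω, (e ω m) ^ 2 ∂μ ≤ 1 / (4 * T) := by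
    intro m
    exact aux_var μ T hT (fun t => X t m) (q m) (fun t ω => hX01 t m ω)
      (fun t => hXm t m) (fun t => hXE t m) (fun t u htu => hXprod m t u htu)
  have hem : ∀ m, Measurable fun ω => e ω m := by
    intro m
    exact ((Finset.measurable_sum Finset.univ fun t _ => hXm t m).div_const _).sub
      measurable_const
  have heabs : ∀ ω m, |e ω m| ≤ 1 := by
    intro ω m
    have h0 : 0 ≤ ∑ t, X t m ω := Finset.sum_nonneg fun t _ => by
      rcases hX01 t m ω with h | h <;> simp [h]
    have h1 : ∑ t, X t m ω ≤ T := by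
      calc ∑ t, X t m ω ≤ ∑ _t : Fin T, (1:ℝ) := Finset.sum_le_sum fun t _ => by
            rcases hX01 t m ω with h | h <;> simp [h]
        _ = T := by simp
    have hql : 0 ≤ (∑ t, X t m ω) / T := div_nonneg h0 hTpos.le
    have hqu : (∑ t, X t m ω) / T ≤ 1 := by
      rw [div_le_one hTpos]; exact h1
    rw [abs_le]
    constructor <;> simp only [hedef] <;> nlinarith [hq0 m, hq1 m]
  -- the squared-norm process
  set h : Ω → ℝ := fun ω => ∑ m, e ω m ^ 2 with hhdef
  have hhm : Measurable h :=
    Finset.measurable_sum Finset.univ fun m _ => (hem m).pow_const 2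
  have hh0 : ∀ ω, 0 ≤ h ω := fun ω => Finset.sum_nonneg fun m _ => sq_nonneg _
  have hhb : ∀ ω, h ω ≤ M := by
    intro ω
    calc ∑ m, e ω m ^ 2 ≤ ∑ _m : Fin M, (1:ℝ) := by
          refine Finset.sum_le_sum fun m _ => ?_
          have := heabs ω m
          nlinarith [abs_nonneg (e ω m), sq_abs (e ω m)]
      _ = M := by simp
  have hhint : Integrable h μ := aux_int_bound hhm M fun ω => by
    rw [abs_of_nonneg (hh0 ω)]; exact hhb ω
  have hIh : ∫ ω, h ω ∂μ ≤ M / (4 * T) := by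
    have heint : ∀ m, Integrable (fun ω => e ω m ^ 2) μ := by
      intro m
      refine aux_int_bound ((hem m).pow_const 2) 1 fun ω => ?_
      have := heabs ω m
      rw [abs_of_nonneg (sq_nonneg _)]
      nlinarith [abs_nonneg (e ω m), sq_abs (e ω m)]
    calc ∫ ω, h ω ∂μ = ∑ m, ∫ ω, e ω m ^ 2 ∂μ := by
          simp only [hhdef]
          exact integral_finset_sum _ fun m _ => heint m
      _ ≤ ∑ _m : Fin M, 1 / (4 * (T:ℝ)) := Finset.sum_le_sum fun m _ => hvar m
      _ = M / (4 * T) := by simp; ring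
  -- pointwise bound
  set K : ℝ := 2 * dmax * Real.sqrt N / σ with hKdef
  have hK0 : 0 ≤ K :=
    div_nonneg (mul_nonneg (by linarith) (Real.sqrt_nonneg _)) hσ.le
  have hpe : ∀ ω, (fun n => phat ω n - p n) = ((Aᵀ * A)⁻¹ * Aᵀ).mulVec (e ω) := by
    intro ω
    have hq : ((Aᵀ * A)⁻¹ * Aᵀ).mulVec q = p := by
      rw [hqdef, Matrix.mulVec_mulVec, aux_BA A hGunit, Matrix.one_mulVec]
    have hsub : e ω = (fun m => (∑ t, if s t ω = m then (1:ℝ) else 0) / T) - q := rfl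
    funext n
    rw [hsub, Matrix.mulVec_sub, Pi.sub_apply, hq, hphat ω]
  have hpoint : ∀ ω, D (phat ω) - D p ≤ K * Real.sqrt (h ω) := by
    intro ω
    have h1 := aux_mismatch A hA0 hAcol d dmax hd0 hd1 p V hV D hD (phat ω)
    have h2 : ∑ n, |phat ω n - p n|
        ≤ Real.sqrt N * Real.sqrt (∑ n, (phat ω n - p n) ^ 2) := by
      simpa using aux_cs (fun n => phat ω n - p n)
    have h6 : Real.sqrt (∑ n, (phat ω n - p n) ^ 2) ≤ Real.sqrt (h ω) / σ := by
      rw [le_div_iff₀ hσ, mul_comm]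
      calc σ * Real.sqrt (∑ n, (phat ω n - p n) ^ 2)
          ≤ Real.sqrt (∑ m, (A.mulVec (fun n => phat ω n - p n) m) ^ 2) :=
            hσmin (fun n => phat ω n - p n)
        _ = Real.sqrt (∑ m, ((A * ((Aᵀ * A)⁻¹ * Aᵀ)).mulVec (e ω) m) ^ 2) := by
            rw [hpe ω, Matrix.mulVec_mulVec]
        _ ≤ Real.sqrt (∑ m, (e ω m) ^ 2) := aux_proj A hGunit (e ω)
        _ = Real.sqrt (h ω) := rfl
    calc D (phat ω) - D p ≤ 2 * dmax * ∑ n, |phat ω n - p n| := h1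
      _ ≤ 2 * dmax * (Real.sqrt N * Real.sqrt (∑ n, (phat ω n - p n) ^ 2)) :=
          mul_le_mul_of_nonneg_left h2 (by linarith)
      _ ≤ 2 * dmax * (Real.sqrt N * (Real.sqrt (h ω) / σ)) :=
          mul_le_mul_of_nonneg_left
            (mul_le_mul_of_nonneg_left h6 (Real.sqrt_nonneg _)) (by linarith)
      _ = K * Real.sqrt (h ω) := by rw [hKdef]; ring
  -- the dominating function is integrable
  have hgint : Integrable (fun ω => K * Real.sqrt (h ω)) μ := by
    refine aux_int_bound (hhm.sqrt.const_mul K) (K * Real.sqrt M) fun ω => ?_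
    rw [abs_of_nonneg (mul_nonneg hK0 (Real.sqrt_nonneg _))]
    exact mul_le_mul_of_nonneg_left (Real.sqrt_le_sqrt (hhb ω)) hK0
  -- bound the expectation of the dominating function
  have hgbound : ∫ ω, K * Real.sqrt (h ω) ∂μ
      ≤ dmax * Real.sqrt (N * M) / (σ * Real.sqrt T) := by
    have hs1 : ∫ ω, K * Real.sqrt (h ω) ∂μ = K * ∫ ω, Real.sqrt (h ω) ∂μ :=
      integral_const_mul K _
    have hs2 : ∫ ω, Real.sqrt (h ω) ∂μ ≤ Real.sqrt (∫ ω, h ω ∂μ) :=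
      aux_sqrt_integral μ h hhm hh0 M hhb
    have hs3 : Real.sqrt (∫ ω, h ω ∂μ) ≤ Real.sqrt ((M:ℝ) / (4 * T)) :=
      Real.sqrt_le_sqrt hIh
    have hs4 : Real.sqrt ((M:ℝ) / (4 * T)) = Real.sqrt M / (2 * Real.sqrt T) := by
      rw [Real.sqrt_div (Nat.cast_nonneg M), show (4:ℝ) * T = 2 ^ 2 * T by norm_num,
        Real.sqrt_mul (by positivity), Real.sqrt_sq (by norm_num)]
    have hs5 : K * (Real.sqrt M / (2 * Real.sqrt T))
        = dmax * Real.sqrt (N * M) / (σ * Real.sqrt T) := by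
      rw [Real.sqrt_mul (Nat.cast_nonneg N), hKdef]
      field_simp
    calc ∫ ω, K * Real.sqrt (h ω) ∂μ = K * ∫ ω, Real.sqrt (h ω) ∂μ := hs1
      _ ≤ K * Real.sqrt ((M:ℝ) / (4 * T)) :=
          mul_le_mul_of_nonneg_left (hs2.trans hs3) hK0
      _ = K * (Real.sqrt M / (2 * Real.sqrt T)) := by rw [hs4]
      _ = dmax * Real.sqrt (N * M) / (σ * Real.sqrt T) := hs5
  by_cases hint : Integrable (fun ω => D (phat ω) - D p) μ
  · exact (integral_mono hint hgint hpoint).trans hgbound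
  · rw [integral_undef hint]
    exact hRHS0
end
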